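/- Let Z be a real skew-symmetric n×n matrix such that I − ZᵀZ is positive definite, and let C = √(I − ZᵀZ) − I. Then ‖C − ½Z²‖_F ≤ ½‖Z‖_F⁴. -/

import Mathlib

open Matrix

/-- The Frobenius norm of a real square matrix: `‖A‖_F = √(trace (Aᵀ A))`. -/
noncomputable def frobeniusNorm {n : ℕ} (A : Matrix (Fin n) (Fin n) ℝ) : ℝ :=
  Real.sqrt (Aᵀ * A).trace

open scoped ComplexOrder in
/-- The positive semidefinite square root of a positive semidefinite matrix, as defined in
Mathlib (December 2024) under the name `Matrix.PosSemidef.sqrt` (since removed). -/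
noncomputable def Matrix.PosSemidef.sqrt {n : Type*} [Fintype n] [DecidableEq n] {𝕜 : Type*} [RCLike 𝕜]
    {A : Matrix n n 𝕜} (hA : A.PosSemidef) : Matrix n n 𝕜 :=
  hA.1.eigenvectorUnitary.1 * diagonal ((↑) ∘ (Real.sqrt ∘ hA.1.eigenvalues)) *
  (star hA.1.eigenvectorUnitary : Matrix n n 𝕜)

section aux

variable {n : ℕ} {U : Matrix (Fin n) (Fin n) ℝ}

lemma conj_sub (f g : Fin n → ℝ) :
    U * diagonal f * star U - U * diagonal g * star U
      = U * diagonal (fun i => f i - g i) * star U := by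
  have : diagonal (fun i => f i - g i) = diagonal f - diagonal g := by
    rw [← diagonal_sub]
  rw [this, mul_sub, sub_mul]

lemma conj_smul (c : ℝ) (f : Fin n → ℝ) :
    c • (U * diagonal f * star U) = U * diagonal (fun i => c * f i) * star U := by
  have : diagonal (fun i => c * f i) = c • diagonal f := by
    rw [show (fun i => c * f i) = c • f from rfl, diagonal_smul]
  rw [this]
  simp only [Matrix.mul_smul, Matrix.smul_mul]

lemma conj_mul_conj (hUU : star U * U = 1) (f g : Fin n → ℝ) :
    (U * diagonal f * star U) * (U * diagonal g * star U)
      = U * diagonal (fun i => f i * g i) * star U := by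
  have h1 : (U * diagonal f * star U) * (U * diagonal g * star U)
      = U * (diagonal f * (star U * U) * diagonal g) * star U := by
    simp only [mul_assoc]
  rw [h1, hUU, mul_one, diagonal_mul_diagonal]

lemma conj_trace (hUU : star U * U = 1) (f : Fin n → ℝ) :
    (U * diagonal f * star U).trace = ∑ i, f i := by
  rw [trace_mul_cycle, hUU, one_mul, trace_diagonal]

lemma conj_transpose_eq (f : Fin n → ℝ) :
    (U * diagonal f * star U)ᵀ = U * diagonal f * star U := by
  simp [star_eq_conjTranspose, conjTranspose_eq_transpose_of_trivial, transpose_mul,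
    diagonal_transpose, mul_assoc]

lemma scalar_bound {μ : ℝ} (h0 : 0 < μ) (h1 : μ ≤ 1) :
    (Real.sqrt μ - (μ + 1) / 2) ^ 2 ≤ (1 - μ) ^ 4 / 4 := by
  set r := Real.sqrt μ with hr
  have hr2 : r ^ 2 = μ := Real.sq_sqrt h0.le
  have hr0 : 0 ≤ r := Real.sqrt_nonneg μ
  have hr1 : r ≤ 1 := by
    rw [hr]; exact Real.sqrt_le_one.mpr h1
  have hgl : r - (μ + 1) / 2 = -((1 - r) ^ 2) / 2 := by
    rw [← hr2]; ring
  have ht : 1 - μ = (1 - r) * (1 + r) := by rw [← hr2]; ring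
  rw [hgl, ht]
  have h1r : 0 ≤ 1 - r := by linarith
  have key : (1 - r) ^ 4 ≤ (1 - r) ^ 4 * (1 + r) ^ 4 := by
    have h4 : (1 : ℝ) ≤ (1 + r) ^ 4 := one_le_pow₀ (by linarith)
    nlinarith [pow_nonneg h1r 4]
  nlinarith [key]

end aux

/-- Let `Z` be a real skew-symmetric `n × n` matrix such that
`I - Zᵀ Z` is positive definite and let `C = √(I - Zᵀ Z) - I` (unique positive
(semi)definite square root).  Then `‖C - ½ Z²‖_F ≤ ½ ‖Z‖_F ^ 4`. -/
theorem stmt5 {n : ℕ} (Z C : Matrix (Fin n) (Fin n) ℝ)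
    (hZ : Zᵀ = -Z) (hpd : (1 - Zᵀ * Z).PosDef)
    (hC : C = hpd.posSemidef.sqrt - 1) :
    frobeniusNorm (C - (1 / 2 : ℝ) • (Z * Z)) ≤ (1 / 2 : ℝ) * frobeniusNorm Z ^ 4 := by
  classical
  have hps := hpd.posSemidef
  have h := hps.isHermitian
  set U : Matrix (Fin n) (Fin n) ℝ := ↑h.eigenvectorUnitary with hUdef
  set μ : Fin n → ℝ := h.eigenvalues with hμdef
  have hUU : star U * U = 1 :=
    (Matrix.mem_unitaryGroup_iff').mp h.eigenvectorUnitary.2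
  have hUU' : U * star U = 1 :=
    (Matrix.mem_unitaryGroup_iff).mp h.eigenvectorUnitary.2
  -- spectral decomposition of A
  have hA2 : 1 - Zᵀ * Z = U * diagonal μ * star U := by
    have := h.spectral_theorem
    simpa using this
  have h1 : (1 : Matrix (Fin n) (Fin n) ℝ) = U * diagonal (fun _ => (1:ℝ)) * star U := by
    rw [show (diagonal (fun _ => (1:ℝ))) = 1 from diagonal_one, mul_one, hUU']
  have hsq : hps.sqrt = U * diagonal (fun i => Real.sqrt (μ i)) * star U := by
    unfold Matrix.PosSemidef.sqrt
    simp [Function.comp_def]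
    rfl
  -- Z * Z = A - 1
  have hZZ : Z * Z = (1 - Zᵀ * Z) - 1 := by
    rw [hZ]; noncomm_ring
  -- eigenvalue bounds
  have hμpos : ∀ i, 0 < μ i := fun i => hpd.eigenvalues_pos i
  have hμle : ∀ i, μ i ≤ 1 := by
    intro i
    have heig := h.eigenvalues_eq i
    set v := h.eigenvectorBasis i with hv
    have hnn : 0 ≤ star (⇑v : Fin n → ℝ) ⬝ᵥ ((Zᵀ * Z) *ᵥ (⇑v : Fin n → ℝ)) := by
      have h2 := (posSemidef_conjTranspose_mul_self Z).dotProduct_mulVec_nonneg (⇑v : Fin n → ℝ)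
      simpa [conjTranspose_eq_transpose_of_trivial] using h2
    have hvv : star (⇑v : Fin n → ℝ) ⬝ᵥ (⇑v : Fin n → ℝ) = 1 := by
      have hn := h.eigenvectorBasis.orthonormal.1 i
      have h3 : (inner (𝕜 := ℝ) v v : ℝ) = star (⇑v : Fin n → ℝ) ⬝ᵥ (⇑v : Fin n → ℝ) :=
        EuclideanSpace.inner_eq_star_dotProduct v v
      rw [← h3, real_inner_self_eq_norm_sq, hv, hn]
      norm_num
    have hexp : star (⇑v : Fin n → ℝ) ⬝ᵥ ((1 - Zᵀ * Z) *ᵥ (⇑v : Fin n → ℝ))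
        = 1 - star (⇑v : Fin n → ℝ) ⬝ᵥ ((Zᵀ * Z) *ᵥ (⇑v : Fin n → ℝ)) := by
      rw [sub_mulVec, dotProduct_sub, one_mulVec, hvv]
    have h4 := heig
    rw [hexp] at h4
    simp only [RCLike.re_to_real] at h4
    have : μ i = h.eigenvalues i := rfl
    rw [this, h4]
    linarith
  -- the matrix E
  have hE : C - (1 / 2 : ℝ) • (Z * Z)
      = U * diagonal (fun i => Real.sqrt (μ i) - (μ i + 1) / 2) * star U := by
    rw [hC, hZZ, hsq, hA2, h1, conj_sub, conj_sub, conj_smul, conj_sub]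
    have hfun : (fun i => Real.sqrt (μ i) - 1 - 1 / 2 * (μ i - 1))
        = fun i => Real.sqrt (μ i) - (μ i + 1) / 2 := by funext i; ring
    rw [hfun]
  set g : Fin n → ℝ := fun i => Real.sqrt (μ i) - (μ i + 1) / 2 with hgdef
  have hEt : (C - (1 / 2 : ℝ) • (Z * Z))ᵀ = C - (1 / 2 : ℝ) • (Z * Z) := by
    rw [hE]; exact conj_transpose_eq g
  have htr : ((C - (1 / 2 : ℝ) • (Z * Z))ᵀ * (C - (1 / 2 : ℝ) • (Z * Z))).trace
      = ∑ i, g i ^ 2 := by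
    rw [hEt, hE, conj_mul_conj hUU, conj_trace hUU]
    exact Finset.sum_congr rfl fun i _ => (sq (g i)).symm
  -- trace of Zᵀ Z
  have hT : (Zᵀ * Z).trace = ∑ i, (1 - μ i) := by
    have h2 : Zᵀ * Z = 1 - (1 - Zᵀ * Z) := by noncomm_ring
    rw [h2, hA2, h1, conj_sub, conj_trace hUU]
  set T : ℝ := ∑ i, (1 - μ i) with hTdef
  have htnn : ∀ i : Fin n, 0 ≤ 1 - μ i := fun i => by linarith [hμle i]
  have hTnn : 0 ≤ T := Finset.sum_nonneg fun i _ => htnn i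
  have hle : ∀ i : Fin n, 1 - μ i ≤ T :=
    fun i => Finset.single_le_sum (fun j _ => htnn j) (Finset.mem_univ i)
  -- sum bound
  have hsum : ∑ i, g i ^ 2 ≤ T ^ 4 / 4 := by
    have step1 : ∑ i, g i ^ 2 ≤ ∑ i, (1 - μ i) ^ 4 / 4 := by
      refine Finset.sum_le_sum fun i _ => ?_
      have := scalar_bound (hμpos i) (hμle i)
      simpa [hgdef] using this
    have step2 : ∑ i, (1 - μ i) ^ 4 ≤ T ^ 4 := by
      calc ∑ i, (1 - μ i) ^ 4 ≤ ∑ i, (1 - μ i) * T ^ 3 := by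
            refine Finset.sum_le_sum fun i _ => ?_
            calc (1 - μ i) ^ 4 = (1 - μ i) * (1 - μ i) ^ 3 := by ring
              _ ≤ (1 - μ i) * T ^ 3 :=
                mul_le_mul_of_nonneg_left (pow_le_pow_left₀ (htnn i) (hle i) 3) (htnn i)
        _ = T * T ^ 3 := by rw [← Finset.sum_mul]
        _ = T ^ 4 := by ring
    calc ∑ i, g i ^ 2 ≤ ∑ i, (1 - μ i) ^ 4 / 4 := step1
      _ = (∑ i, (1 - μ i) ^ 4) / 4 := by rw [Finset.sum_div]
      _ ≤ T ^ 4 / 4 := by linarith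
  -- conclude
  have h5 : Real.sqrt T ^ 4 = T ^ 2 := by
    rw [show (4 : ℕ) = 2 * 2 from rfl, pow_mul, Real.sq_sqrt hTnn]
  have hrhs : (1 / 2 : ℝ) * frobeniusNorm Z ^ 4 = T ^ 2 / 2 := by
    rw [frobeniusNorm, hT, h5]; ring
  rw [hrhs, frobeniusNorm, htr]
  calc Real.sqrt (∑ i, g i ^ 2) ≤ Real.sqrt (T ^ 4 / 4) := Real.sqrt_le_sqrt hsum
    _ = T ^ 2 / 2 := by
        rw [show T ^ 4 / 4 = (T ^ 2 / 2) ^ 2 by ring, Real.sqrt_sq (by positivity)]
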